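/- arXiv:1711.08201 — 3 statements merged into one kernel-verified Lean document; each statement's English description precedes it below -/
import Mathlib

section
/- Let R be a discrete valuation ring with maximal ideal (π), residue field F = R/(π), and fraction field K. Let G be a finite group acting linearly on R[x_1,…,x_n], and let f_1,…,f_n ∈ R[x_1,…,x_n]^G be algebraically independent homogeneous invariants such that K[x_1,…,x_n]^G = K[f_1,…,f_n]. Then R[x_1,…,x_n]^G = R[f_1,…,f_n] if and only if the images of f_1,…,f_n in F[x_1,…,x_n] are algebraically independent over F. -/
open MvPolynomial

/-- The linear-substitution action of an invertible matrix `M` on polynomials: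
`(M • f)(a) = f (M⁻¹ • a)`, i.e. `X i ↦ ∑ j (M⁻¹) i j • X j`. -/
noncomputable def gAct {R : Type*} [CommRing R] {n : ℕ}
    (M : Matrix.GeneralLinearGroup (Fin n) R) :
    MvPolynomial (Fin n) R →ₐ[R] MvPolynomial (Fin n) R :=
  aeval fun i => ∑ j, C ((M⁻¹ : Matrix.GeneralLinearGroup (Fin n) R) i j) * X j

/-- The ring of invariants `R[x_1,…,x_n]^G` of the representation `ρ : G →* GL_n(R)`. -/
noncomputable def invariantRing {R : Type*} [CommRing R] {n : ℕ} {G : Type*} [Group G]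
    (ρ : G →* Matrix.GeneralLinearGroup (Fin n) R) : Subalgebra R (MvPolynomial (Fin n) R) :=
  ⨅ σ : G, AlgHom.equalizer (gAct (ρ σ)) (AlgHom.id R _)

/-- A regular local ring: Noetherian, local, and the Krull dimension equals the
dimension of the cotangent space. -/
def IsRegularLocalRingP (A : Type*) [CommRing A] : Prop :=
  IsNoetherianRing A ∧ ∃ h : IsLocalRing A,
    haveI := h
    ringKrullDim A =
      Module.finrank (IsLocalRing.ResidueField A) (IsLocalRing.CotangentSpace A)

/-- A regular ring: Noetherian, and all localizations at primes are regular local rings. -/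
def IsRegularRingP (A : Type*) [CommRing A] : Prop :=
  IsNoetherianRing A ∧ ∀ (p : Ideal A) (hp : p.IsPrime),
    haveI := hp
    IsRegularLocalRingP (Localization.AtPrime p)

open scoped TensorProduct in
/-- The tensor product `B_{I_1}R ⊗_R ⋯ ⊗_R B_{I_n}R` of the blowup (Rees) algebras of the
ideals `I i`. -/
noncomputable def BlowupTensor (R : Type*) [CommRing R] {n : ℕ} (I : Fin n → Ideal R) : Type _ :=
  ⨂[R] i : Fin n, ↥(reesAlgebra (I i))

noncomputable instance (R : Type*) [CommRing R] {n : ℕ} (I : Fin n → Ideal R) :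
    CommRing (BlowupTensor R I) := by unfold BlowupTensor; infer_instance

noncomputable instance (R : Type*) [CommRing R] {n : ℕ} (I : Fin n → Ideal R) :
    Algebra R (BlowupTensor R I) := by unfold BlowupTensor; infer_instance

/-- A pseudoreflection: a nonidentity invertible matrix fixing a hyperplane pointwise,
i.e. `g - 1` has rank at most one. -/
def IsPseudoreflection {n : ℕ} {K : Type*} [Field K]
    (g : Matrix.GeneralLinearGroup (Fin n) K) : Prop :=
  g ≠ 1 ∧ Matrix.rank ((g : Matrix (Fin n) (Fin n) K) - 1) ≤ 1

section Aux
variable {R S : Type*} [CommRing R] [CommRing S] {n : ℕ}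

lemma aux_map_aeval (φ : R →+* S) (g : Fin n → MvPolynomial (Fin n) R)
    (Q : MvPolynomial (Fin n) R) :
    map φ (aeval g Q) = aeval (fun i => map φ (g i)) (map φ Q) := by
  induction Q using MvPolynomial.induction_on with
  | C a => simp [aeval_C]
  | add p q hp hq => simp only [map_add, hp, hq]
  | mul_X p i hp => simp only [map_mul, map_X, aeval_X, hp]

lemma aux_gAct_map (φ : R →+* S) (M : Matrix.GeneralLinearGroup (Fin n) R)
    (p : MvPolynomial (Fin n) R) :
    gAct (Matrix.GeneralLinearGroup.map φ M) (map φ p) = map φ (gAct M p) := by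
  rw [gAct, gAct, aux_map_aeval]
  have h1 : (fun i => map φ (∑ j, C ((M⁻¹ : Matrix.GeneralLinearGroup (Fin n) R) i j) * X j)) =
      fun i => ∑ j, C (((Matrix.GeneralLinearGroup.map φ M)⁻¹ :
        Matrix.GeneralLinearGroup (Fin n) S) i j) * X j := by
    funext i
    rw [map_sum]
    refine Finset.sum_congr rfl fun j _ => ?_
    rw [map_mul, map_C, map_X, ← Matrix.GeneralLinearGroup.map_inv,
      Matrix.GeneralLinearGroup.map_apply]
  rw [h1]

lemma aux_mem_invariantRing {G : Type*} [Group G]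
    (ρ : G →* Matrix.GeneralLinearGroup (Fin n) R) (p : MvPolynomial (Fin n) R) :
    p ∈ invariantRing ρ ↔ ∀ σ : G, gAct (ρ σ) p = p := by
  simp [invariantRing, Algebra.mem_iInf, AlgHom.mem_equalizer]

end Aux

/-- Over a DVR `R` with fraction field `K` and residue field `F`: if homogeneous invariants
`f_1,…,f_n` generate `K[x]^G`, then they generate `R[x]^G` iff their reductions mod `π` are
algebraically independent over `F`. -/
theorem stmt11 {R : Type*} [CommRing R] [IsDomain R] [IsDiscreteValuationRing R] {n : ℕ}
    {G : Type*} [Group G] [Finite G]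
    (ρ : G →* Matrix.GeneralLinearGroup (Fin n) R)
    (f : Fin n → MvPolynomial (Fin n) R) (d : Fin n → ℕ)
    (hmem : ∀ i, f i ∈ invariantRing ρ)
    (hhom : ∀ i, (f i).IsHomogeneous (d i))
    (hind : AlgebraicIndependent R f)
    (hK : invariantRing
        ((Matrix.GeneralLinearGroup.map (algebraMap R (FractionRing R))).comp ρ) =
      Algebra.adjoin (FractionRing R)
        (Set.range fun i => MvPolynomial.map (algebraMap R (FractionRing R)) (f i))) :
    invariantRing ρ = Algebra.adjoin R (Set.range f) ↔
      AlgebraicIndependent (IsLocalRing.ResidueField R)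
        (fun i => MvPolynomial.map (IsLocalRing.residue R) (f i)) := by
  classical
  obtain ⟨π, hπ⟩ := IsDiscreteValuationRing.exists_irreducible R
  have hπ0 : π ≠ 0 := hπ.ne_zero
  have hCπ0 : (C π : MvPolynomial (Fin n) R) ≠ 0 := by simpa using hπ0
  set res := IsLocalRing.residue R with hresdef
  have hres : ∀ x : R, res x = 0 ↔ π ∣ x := by
    intro x
    have e : res x = Ideal.Quotient.mk (IsLocalRing.maximalIdeal R) x := rfl
    rw [hresdef, IsLocalRing.residue_eq_zero_iff, hπ.maximalIdeal_eq, Ideal.mem_span_singleton]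
  have hresπ : res π = 0 := (hres π).mpr dvd_rfl
  have hdvd : ∀ A : MvPolynomial (Fin n) R, map res A = 0 → ∃ B, A = C π * B := by
    intro A hA
    have h1 : C π ∣ A := by
      rw [C_dvd_iff_dvd_coeff]
      intro s
      rw [← hres]
      have := congrArg (fun p => coeff s p) hA
      simpa [coeff_map] using this
    exact h1
  have hmapres : ∀ Q : MvPolynomial (Fin n) R,
      map res (aeval f Q) = aeval (fun i => map res (f i)) (map res Q) :=
    fun Q => aux_map_aeval _ f Q
  have haC : aeval f (C π : MvPolynomial (Fin n) R) = C π := by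
    rw [aeval_C, MvPolynomial.algebraMap_eq]
  have hfix : ∀ (σ : G) (i : Fin n), gAct (ρ σ) (f i) = f i :=
    fun σ i => (aux_mem_invariantRing ρ (f i)).mp (hmem i) σ
  have hinvQ : ∀ Q : MvPolynomial (Fin n) R, ∀ σ : G, gAct (ρ σ) (aeval f Q) = aeval f Q := by
    intro Q σ
    rw [comp_aeval_apply]
    have e : (fun i => gAct (ρ σ) (f i)) = f := funext (hfix σ)
    rw [e]
  constructor
  · -- generation over R implies independence mod π
    intro hEq
    rw [algebraicIndependent_iff]
    intro Qb hQb
    obtain ⟨Q, rfl⟩ := MvPolynomial.map_surjective res Ideal.Quotient.mk_surjective Qb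
    obtain ⟨h, hh⟩ := hdvd (aeval f Q) (by rw [hmapres, hQb])
    have hinv : h ∈ invariantRing ρ := by
      rw [aux_mem_invariantRing]
      intro σ
      have h1 := hinvQ Q σ
      rw [hh] at h1
      have h2 : gAct (ρ σ) (C π * h) = C π * gAct (ρ σ) h := by
        rw [map_mul]
        congr 1
        rw [← MvPolynomial.algebraMap_eq]
        exact (gAct (ρ σ)).commutes π
      rw [h2] at h1
      exact mul_left_cancel₀ hCπ0 h1
    rw [hEq, Algebra.adjoin_range_eq_range_aeval] at hinv
    obtain ⟨P, hP⟩ := (AlgHom.mem_range _).mp hinv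
    have hz : aeval f (Q - C π * P) = 0 := by
      rw [map_sub, map_mul, haC, hP, ← hh, sub_self]
    have hQP : Q - C π * P = 0 := algebraicIndependent_iff.mp hind _ hz
    have hQ' : Q = C π * P := by
      rw [← sub_eq_zero]; exact hQP
    rw [hQ', map_mul, map_C, hresπ]
    simp
  · -- independence mod π implies generation over R
    intro hbar
    have descend : ∀ (m : ℕ) (h : MvPolynomial (Fin n) R),
        (∃ Q, aeval (R := R) f Q = C (π ^ m) * h) → ∃ P, aeval (R := R) f P = h := by
      intro m
      induction m with
      | zero =>
        rintro h ⟨Q, hQ⟩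
        exact ⟨Q, by simpa using hQ⟩
      | succ m ih =>
        rintro h ⟨Q, hQ⟩
        have h0 : aeval (fun i => map res (f i)) (map res Q) = 0 := by
          rw [← hmapres, hQ, map_mul, map_C, map_pow, hresπ]
          simp
        have hQ0 : map res Q = 0 := algebraicIndependent_iff.mp hbar _ h0
        obtain ⟨Q', hQ'⟩ := hdvd Q hQ0
        refine ih h ⟨Q', ?_⟩
        apply mul_left_cancel₀ hCπ0
        rw [hQ', map_mul, haC] at hQ
        rw [hQ, ← mul_assoc, ← C_mul, ← pow_succ']
    apply le_antisymm
    · intro h hh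
      set φ := algebraMap R (FractionRing R) with hφdef
      have hφinj : Function.Injective φ := IsFractionRing.injective R (FractionRing R)
      have hhK : MvPolynomial.map φ h ∈
          invariantRing ((Matrix.GeneralLinearGroup.map φ).comp ρ) := by
        rw [aux_mem_invariantRing]
        intro σ
        show gAct (Matrix.GeneralLinearGroup.map φ (ρ σ)) (map φ h) = map φ h
        rw [aux_gAct_map, (aux_mem_invariantRing ρ h).mp hh σ]
      rw [hK, Algebra.adjoin_range_eq_range_aeval] at hhK
      obtain ⟨P, hP⟩ := (AlgHom.mem_range _).mp hhK
      obtain ⟨b, hb⟩ := IsLocalization.exist_integer_multiples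
        (nonZeroDivisors R) P.support P.coeff
      choose q hq using fun s (hs : s ∈ P.support) => RingHom.mem_range.mp (hb s hs)
      set Q₀ : MvPolynomial (Fin n) R :=
        ∑ s ∈ P.support.attach, monomial s.1 (q s.1 s.2) with hQ₀
      have hmapQ₀ : map φ Q₀ = C (φ b) * P := by
        rw [hQ₀, map_sum]
        conv_rhs => rw [P.as_sum, Finset.mul_sum,
          ← Finset.sum_attach P.support (fun s => C (φ b) * monomial s (P.coeff s))]
        refine Finset.sum_congr rfl fun s _ => ?_
        rw [map_monomial, C_mul_monomial, hq s.1 s.2, Algebra.smul_def]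
      have hb0 : (b : R) ≠ 0 := nonZeroDivisors.coe_ne_zero b
      obtain ⟨m, u, hbu⟩ := IsDiscreteValuationRing.eq_unit_mul_pow_irreducible hb0 hπ
      set Q := C ((u⁻¹ : Rˣ) : R) * Q₀ with hQdef
      have haevalC : ∀ (a : FractionRing R) (p : MvPolynomial (Fin n) (FractionRing R)),
          aeval (fun i => map φ (f i)) (C a * p) =
            C a * aeval (fun i => map φ (f i)) p := by
        intro a p
        rw [map_mul, aeval_C, MvPolynomial.algebraMap_eq]
      have hkey : aeval f Q = C (π ^ m) * h := by
        apply MvPolynomial.map_injective φ hφinj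
        have e1 : MvPolynomial.map φ Q = C (φ ((u⁻¹ : Rˣ) : R)) * (C (φ b) * P) := by
          rw [hQdef, map_mul, map_C, hmapQ₀]
        rw [aux_map_aeval φ f Q, e1, haevalC, haevalC, hP, map_mul, map_C,
          ← mul_assoc, ← C_mul, ← map_mul φ]
        congr 3
        rw [hbu, ← mul_assoc]
        simp
      rw [Algebra.adjoin_range_eq_range_aeval]
      obtain ⟨P', hP'⟩ := descend m h ⟨Q, hkey⟩
      exact (AlgHom.mem_range _).mpr ⟨P', hP'⟩
    · rw [Algebra.adjoin_le_iff]
      rintro x ⟨i, rfl⟩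
      exact hmem i
end

section
/- Let R be a discrete valuation ring with maximal ideal (π), residue field F = R/(π), and fraction field K, and let G be a finite group with a representation G → GL_n(R). If both K[x_1,…,x_n]^G and F[x_1,…,x_n]^G are polynomial rings generated by homogeneous invariants of the same multiset of degrees, then R[x_1,…,x_n]^G is a polynomial ring over R. -/
open MvPolynomial

section Basic
variable {R S : Type*} [CommRing R] [CommRing S] {n : ℕ} {G : Type*} [Group G]

lemma mem_invariantRing_iff (ρ : G →* Matrix.GeneralLinearGroup (Fin n) R)
    {f : MvPolynomial (Fin n) R} :
    f ∈ invariantRing ρ ↔ ∀ σ : G, gAct (ρ σ) f = f := by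
  simp [invariantRing, Algebra.mem_iInf, AlgHom.mem_equalizer]

lemma gAct_isHomogeneous (M : Matrix.GeneralLinearGroup (Fin n) R)
    {f : MvPolynomial (Fin n) R} {d : ℕ} (hf : f.IsHomogeneous d) :
    (gAct M f).IsHomogeneous d := by
  have := hf.aeval (fun i => ∑ j, C ((M⁻¹ : Matrix.GeneralLinearGroup (Fin n) R) i j) * X j)
    (fun i => IsHomogeneous.sum _ _ _ (fun j _ => isHomogeneous_C_mul_X _ _))
  simpa [gAct] using this

lemma homogeneousComponent_gAct (M : Matrix.GeneralLinearGroup (Fin n) R) (d : ℕ)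
    (f : MvPolynomial (Fin n) R) :
    homogeneousComponent d (gAct M f) = gAct M (homogeneousComponent d f) := by
  classical
  conv_lhs => rw [← sum_homogeneousComponent f, map_sum, map_sum]
  rw [Finset.sum_congr rfl (fun i _ => homogeneousComponent_of_mem
    ((mem_homogeneousSubmodule _ _).2
      (gAct_isHomogeneous M (homogeneousComponent_isHomogeneous i f))))]
  rw [Finset.sum_ite_eq]
  split_ifs with h
  · rfl
  · rw [homogeneousComponent_eq_zero, map_zero]
    simpa using Nat.lt_of_not_le (by simpa using h)

lemma homogeneousComponent_mem_invariantRing (ρ : G →* Matrix.GeneralLinearGroup (Fin n) R)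
    {f : MvPolynomial (Fin n) R} (hf : f ∈ invariantRing ρ) (d : ℕ) :
    homogeneousComponent d f ∈ invariantRing ρ := by
  rw [mem_invariantRing_iff] at hf ⊢
  intro σ
  rw [← homogeneousComponent_gAct, hf]

lemma map_gAct (φ : R →+* S) (M : Matrix.GeneralLinearGroup (Fin n) R)
    (f : MvPolynomial (Fin n) R) :
    map φ (gAct M f) = gAct (Matrix.GeneralLinearGroup.map φ M) (map φ f) := by
  apply MvPolynomial.induction_on f
  · intro r
    simp [gAct, aeval_C]
  · intro p q hp hq
    simp [map_add, hp, hq]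
  · intro p i hp
    simp only [map_mul, hp, gAct, aeval_X, map_X]
    congr 1
    simp only [map_sum, map_mul, map_C, map_X]
    refine Finset.sum_congr rfl fun j _ => ?_
    rw [← map_inv, Matrix.GeneralLinearGroup.map_apply]

end Basic

section Prod
variable {S : Type*} [CommRing S] {n : ℕ}

lemma aeval_monomial_eq (f : Fin n → MvPolynomial (Fin n) S) (μ : Fin n →₀ ℕ) (c : S) :
    aeval f (monomial μ c) = c • ∏ i, f i ^ μ i := by
  rw [aeval_monomial, Finsupp.prod_pow, smul_eq_C_mul, algebraMap_eq]

lemma prod_pow_isHomogeneous {f : Fin n → MvPolynomial (Fin n) S} {d : Fin n → ℕ}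
    (hhom : ∀ i, (f i).IsHomogeneous (d i)) (μ : Fin n →₀ ℕ) :
    (∏ i, f i ^ μ i).IsHomogeneous (Finsupp.weight d μ) := by
  have := IsHomogeneous.prod Finset.univ (fun i => f i ^ μ i) (fun i => d i * μ i)
    (fun i _ => (hhom i).pow (μ i))
  convert this using 1
  rw [Finsupp.weight_apply, Finsupp.sum_fintype]
  · exact Finset.sum_congr rfl fun i _ => by simp [mul_comm]
  · simp

lemma aeval_isWeightedHomogeneous_isHomogeneous {f : Fin n → MvPolynomial (Fin n) S}
    {d : Fin n → ℕ} (hhom : ∀ i, (f i).IsHomogeneous (d i)) {q : MvPolynomial (Fin n) S} {m : ℕ}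
    (hq : q.IsWeightedHomogeneous d m) : (aeval f q).IsHomogeneous m := by
  conv_lhs => rw [q.as_sum]
  rw [map_sum]
  apply IsHomogeneous.sum
  intro μ hμ
  rw [aeval_monomial_eq]
  have : Finsupp.weight d μ = m := hq (mem_support_iff.1 hμ)
  rw [smul_eq_C_mul]
  exact IsHomogeneous.C_mul (this ▸ prod_pow_isHomogeneous hhom μ) _

end Prod

section FieldSide
variable {k : Type*} [Field k] {n : ℕ}

lemma pos_deg {f : Fin n → MvPolynomial (Fin n) k} {d : Fin n → ℕ}
    (hf : AlgebraicIndependent k f) (hhom : ∀ i, (f i).IsHomogeneous (d i)) (i : Fin n) :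
    0 < d i := by
  by_contra h
  push_neg at h
  interval_cases hdi : d i
  -- f i = C c
  have htd : (f i).totalDegree = 0 := Nat.le_zero.1 (hdi ▸ (hhom i).totalDegree_le)
  have hC : f i = C (coeff 0 (f i)) := by
    ext μ
    by_cases hμ : μ = 0
    · simp [hμ]
    · rw [coeff_C, if_neg (Ne.symm hμ)]
      by_contra hc
      obtain ⟨x, hx⟩ := Finsupp.ne_iff.1 hμ
      exact hx (((totalDegree_eq_zero_iff _ _).1 htd μ (mem_support_iff.2 hc) x).trans (by simp))
  have h0 : (X i - C (coeff 0 (f i)) : MvPolynomial (Fin n) k) ≠ 0 := by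
    intro h0
    have := congrArg (coeff (Finsupp.single i 1)) h0
    simp [coeff_C, eq_comm (a := (0 : Fin n →₀ ℕ)), Finsupp.single_eq_zero] at this
  apply h0
  apply hf.eq_zero_of_aeval_eq_zero
  rw [map_sub, aeval_X, aeval_C, algebraMap_eq, ← hC, sub_self]

lemma finite_weight_eq {n : ℕ} {d : Fin n → ℕ} (hd : ∀ i, 0 < d i) (m : ℕ) :
    Finite {μ : Fin n →₀ ℕ // Finsupp.weight d μ = m} := by
  have hb : ∀ μ : {μ : Fin n →₀ ℕ // Finsupp.weight d μ = m}, ∀ i, μ.1 i ≤ m := by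
    rintro ⟨μ, hμ⟩ i
    subst hμ
    exact Finsupp.le_weight d (Nat.pos_iff_ne_zero.1 (hd i)) μ
  apply Finite.of_injective
    (fun μ => (fun i => (⟨μ.1 i, Nat.lt_succ_of_le (hb μ i)⟩ : Fin (m+1)) : Fin n → Fin (m+1)))
  intro a b hab
  apply Subtype.ext
  apply Finsupp.ext
  intro i
  simpa using congrFun hab i

lemma linearIndependent_prod_pow {f : Fin n → MvPolynomial (Fin n) k}
    (hf : AlgebraicIndependent k f) :
    LinearIndependent k (fun μ : Fin n →₀ ℕ => ∏ i, f i ^ μ i) := by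
  have h1 : LinearIndependent k (fun μ : Fin n →₀ ℕ => (monomial μ (1:k))) := by
    have := (basisMonomials (Fin n) k).linearIndependent
    rwa [coe_basisMonomials] at this
  have h2 := h1.map' (aeval f).toLinearMap (LinearMap.ker_eq_bot.2 hf)
  have hfun : (fun μ : Fin n →₀ ℕ => ∏ i, f i ^ μ i)
      = (⇑(aeval f).toLinearMap ∘ fun μ => monomial μ (1:k)) := by
    funext μ
    rw [Function.comp_apply, AlgHom.toLinearMap_apply, aeval_monomial_eq, one_smul]
  rw [hfun]
  exact h2

lemma aeval_weightedHomogeneousComponent_eq {S : Type*} [CommRing S]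
    {f : Fin n → MvPolynomial (Fin n) S} {d : Fin n → ℕ}
    (hhom : ∀ i, (f i).IsHomogeneous (d i)) {q : MvPolynomial (Fin n) S} {m : ℕ}
    (hq : (aeval f q).IsHomogeneous m) :
    aeval f (weightedHomogeneousComponent d m q) = aeval f q := by
  classical
  have hfin := weightedHomogeneousComponent_finsupp (w := d) (φ := q)
  set s := hfin.toFinset with hs
  have hsum : (∑ j ∈ s, weightedHomogeneousComponent d j q) = q := by
    rw [← finsum_eq_sum _ hfin, sum_weightedHomogeneousComponent]
  have key : aeval f q = ∑ j ∈ s, aeval f (weightedHomogeneousComponent d j q) := by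
    rw [← map_sum, hsum]
  have h2 : homogeneousComponent m (aeval f q) = aeval f q := by
    rw [homogeneousComponent_of_mem ((mem_homogeneousSubmodule _ _).2 hq), if_pos rfl]
  have h3 : homogeneousComponent m (aeval f q)
      = if m ∈ s then aeval f (weightedHomogeneousComponent d m q) else 0 := by
    conv_lhs => rw [key]
    rw [map_sum]
    rw [Finset.sum_congr rfl (fun j _ => homogeneousComponent_of_mem
      ((mem_homogeneousSubmodule _ _).2 (aeval_isWeightedHomogeneous_isHomogeneous hhom
        (weightedHomogeneousComponent_isWeightedHomogeneous j q))))]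
    rw [Finset.sum_ite_eq]
  by_cases hm : m ∈ s
  · rw [← h2, h3, if_pos hm]
  · have h0 : weightedHomogeneousComponent d m q = 0 := by
      have := hfin.mem_toFinset.not.1 hm
      simpa [Function.mem_support] using this
    rw [h0, map_zero, ← h2, h3, if_neg hm]

lemma adjoin_inf_homog_eq_span {f : Fin n → MvPolynomial (Fin n) k} {d : Fin n → ℕ}
    (hhom : ∀ i, (f i).IsHomogeneous (d i)) (m : ℕ) :
    (Algebra.adjoin k (Set.range f)).toSubmodule ⊓ (homogeneousSubmodule (Fin n) k m)
      = Submodule.span k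
        ((fun μ => ∏ i, f i ^ μ i) '' {μ : Fin n →₀ ℕ | Finsupp.weight d μ = m}) := by
  apply le_antisymm
  · intro p hp
    obtain ⟨hp1, hp2⟩ := Submodule.mem_inf.1 hp
    rw [Subalgebra.mem_toSubmodule, Algebra.adjoin_range_eq_range_aeval] at hp1
    obtain ⟨q, hq⟩ := hp1
    replace hq : aeval f q = p := hq
    subst hq
    rw [mem_homogeneousSubmodule] at hp2
    rw [← aeval_weightedHomogeneousComponent_eq hhom hp2]
    set q' := weightedHomogeneousComponent d m q with hq'
    have hwq : q'.IsWeightedHomogeneous d m :=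
      weightedHomogeneousComponent_isWeightedHomogeneous m q
    have hrw : aeval f q' = ∑ μ ∈ q'.support, aeval f (monomial μ (coeff μ q')) := by
      conv_lhs => rw [q'.as_sum]
      rw [map_sum]
    rw [hrw]
    apply Submodule.sum_mem
    intro μ hμ
    rw [aeval_monomial_eq]
    exact Submodule.smul_mem _ _
      (Submodule.subset_span ⟨μ, hwq (mem_support_iff.1 hμ), rfl⟩)
  · rw [Submodule.span_le]
    rintro _ ⟨μ, hμ, rfl⟩
    refine ⟨Subalgebra.prod_mem _ fun i _ =>
      pow_mem (Algebra.subset_adjoin (Set.mem_range_self i)) _, ?_⟩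
    exact (mem_homogeneousSubmodule _ _).2 (hμ ▸ prod_pow_isHomogeneous hhom μ)

lemma finrank_adjoin_inf_homog {f : Fin n → MvPolynomial (Fin n) k} {d : Fin n → ℕ}
    (hf : AlgebraicIndependent k f) (hhom : ∀ i, (f i).IsHomogeneous (d i)) (m : ℕ) :
    Module.finrank k
      ↥((Algebra.adjoin k (Set.range f)).toSubmodule ⊓ homogeneousSubmodule (Fin n) k m)
      = Nat.card {μ : Fin n →₀ ℕ // Finsupp.weight d μ = m} := by
  have hd := pos_deg hf hhom
  have hfin : Finite {μ : Fin n →₀ ℕ // Finsupp.weight d μ = m} := finite_weight_eq hd m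
  cases nonempty_fintype {μ : Fin n →₀ ℕ // Finsupp.weight d μ = m}
  rw [adjoin_inf_homog_eq_span hhom m]
  have himg : ((fun μ => ∏ i, f i ^ μ i) '' {μ : Fin n →₀ ℕ | Finsupp.weight d μ = m})
      = Set.range (fun μ : {μ : Fin n →₀ ℕ // Finsupp.weight d μ = m} => ∏ i, f i ^ μ.1 i) :=
    Set.image_eq_range _ _
  rw [himg]
  have hli : LinearIndependent k
      (fun μ : {μ : Fin n →₀ ℕ // Finsupp.weight d μ = m} => ∏ i, f i ^ μ.1 i) :=
    (linearIndependent_prod_pow hf).comp Subtype.val Subtype.val_injective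
  rw [finrank_span_eq_card hli, Nat.card_eq_fintype_card]

end FieldSide

section MapLemmas
variable {R S : Type*} [CommRing R] [CommRing S] {n : ℕ} {G : Type*} [Group G]

lemma map_mem_invariantRing (φ : R →+* S) (ρ : G →* Matrix.GeneralLinearGroup (Fin n) R)
    {f : MvPolynomial (Fin n) R} (hf : f ∈ invariantRing ρ) :
    map φ f ∈ invariantRing ((Matrix.GeneralLinearGroup.map φ).comp ρ) := by
  rw [mem_invariantRing_iff] at hf ⊢
  intro σ
  rw [MonoidHom.comp_apply, ← map_gAct, hf]

lemma mem_invariantRing_of_map (φ : R →+* S) (hφ : Function.Injective φ)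
    (ρ : G →* Matrix.GeneralLinearGroup (Fin n) R) {f : MvPolynomial (Fin n) R}
    (hf : map φ f ∈ invariantRing ((Matrix.GeneralLinearGroup.map φ).comp ρ)) :
    f ∈ invariantRing ρ := by
  rw [mem_invariantRing_iff] at hf ⊢
  intro σ
  have := hf σ
  rw [MonoidHom.comp_apply, ← map_gAct] at this
  exact MvPolynomial.map_injective φ hφ this

lemma map_aeval_eq (φ : R →+* S) (g : Fin n → MvPolynomial (Fin n) R)
    (q : MvPolynomial (Fin n) R) :
    map φ (aeval g q) = aeval (fun i => map φ (g i)) (map φ q) := by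
  rw [aeval_def, aeval_def, algebraMap_eq, algebraMap_eq, map_eval₂, eval₂_map, eval₂_map]
  rfl

lemma map_smul_eq (φ : R →+* S) (r : R) (p : MvPolynomial (Fin n) R) :
    map φ (r • p) = φ r • map φ p := by
  rw [smul_eq_C_mul, smul_eq_C_mul, map_mul, map_C]

lemma exists_preimage_map (φ : R →+* S) (p : MvPolynomial (Fin n) S)
    (h : ∀ μ, ∃ r, φ r = coeff μ p) : ∃ q : MvPolynomial (Fin n) R, map φ q = p := by
  choose r hr using h
  refine ⟨∑ μ ∈ p.support, monomial μ (r μ), ?_⟩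
  rw [map_sum]
  conv_rhs => rw [p.as_sum]
  exact Finset.sum_congr rfl fun μ _ => by rw [map_monomial, hr]

lemma homogeneousSubmodule_fg (d : ℕ) : (homogeneousSubmodule (Fin n) R d).FG := by
  classical
  have hfin : {μ : Fin n →₀ ℕ | μ.degree = d}.Finite := by
    have h1 : {μ : Fin n →₀ ℕ | μ.degree = d}
        = {μ : Fin n →₀ ℕ | Finsupp.weight (1 : Fin n → ℕ) μ = d} := by
      ext μ
      rw [Set.mem_setOf_eq, Set.mem_setOf_eq, Finsupp.degree_eq_weight_one]
      exact Iff.rfl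
    rw [h1, ← Set.finite_coe_iff]
    exact finite_weight_eq (fun _ => Nat.one_pos) d
  refine ⟨hfin.toFinset.image (fun μ => monomial μ (1 : R)), ?_⟩
  apply le_antisymm
  · rw [Submodule.span_le]
    intro p hp
    simp only [Finset.coe_image, Set.mem_image, Finset.mem_coe, Set.Finite.mem_toFinset] at hp
    obtain ⟨μ, hμ, rfl⟩ := hp
    exact (mem_homogeneousSubmodule _ _).2 (isHomogeneous_monomial _ hμ)
  · intro p hp
    rw [mem_homogeneousSubmodule] at hp
    rw [p.as_sum]
    apply Submodule.sum_mem
    intro μ hμ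
    have h1 : monomial μ (coeff μ p) = (coeff μ p) • monomial μ (1 : R) := by
      rw [smul_monomial, smul_eq_mul, mul_one]
    rw [h1]
    apply Submodule.smul_mem
    apply Submodule.subset_span
    simp only [Finset.coe_image, Set.mem_image, Finset.mem_coe, Set.Finite.mem_toFinset]
    refine ⟨μ, ?_, rfl⟩
    rw [Set.mem_setOf_eq, Finsupp.degree_eq_weight_one]
    exact hp (mem_support_iff.1 hμ)

end MapLemmas

section DVRMain
open IsLocalRing
variable {R : Type*} [CommRing R] [IsDomain R] [IsDiscreteValuationRing R] {n : ℕ}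
  {G : Type*} [Group G]

/-- The degree-`m` part of the invariant ring, as an `R`-submodule. -/
noncomputable def Ad (ρ : G →* Matrix.GeneralLinearGroup (Fin n) R) (m : ℕ) :
    Submodule R (MvPolynomial (Fin n) R) :=
  (Subalgebra.toSubmodule (invariantRing ρ)) ⊓ homogeneousSubmodule (Fin n) R m

lemma mem_Ad {ρ : G →* Matrix.GeneralLinearGroup (Fin n) R} {m : ℕ}
    {f : MvPolynomial (Fin n) R} :
    f ∈ Ad ρ m ↔ f ∈ invariantRing ρ ∧ f.IsHomogeneous m := by
  rw [Ad, Submodule.mem_inf, Subalgebra.mem_toSubmodule, mem_homogeneousSubmodule]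

lemma Ad_fg (ρ : G →* Matrix.GeneralLinearGroup (Fin n) R) (m : ℕ) : (Ad ρ m).FG := by
  have hle : Ad ρ m ≤ homogeneousSubmodule (Fin n) R m := inf_le_right
  haveI := isNoetherian_of_fg_of_noetherian _ (homogeneousSubmodule_fg (R := R) (n := n) m)
  have h1 := IsNoetherian.noetherian ((Ad ρ m).comap (homogeneousSubmodule (Fin n) R m).subtype)
  have h2 := h1.map (homogeneousSubmodule (Fin n) R m).subtype
  rwa [Submodule.map_comap_subtype, inf_eq_right.2 hle] at h2

lemma residue_eq_zero_iff {π : R} (hπ : Irreducible π) (r : R) :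
    residue R r = 0 ↔ π ∣ r := by
  have h1 : residue R r = 0 ↔ r ∈ maximalIdeal R := Ideal.Quotient.eq_zero_iff_mem
  rw [h1, (IsDiscreteValuationRing.irreducible_iff_uniformizer π).1 hπ, Ideal.mem_span_singleton]

lemma mapF_eq_zero_iff {π : R} (hπ : Irreducible π) (p : MvPolynomial (Fin n) R) :
    map (residue R) p = 0 ↔ C π ∣ p := by
  rw [C_dvd_iff_dvd_coeff]
  constructor
  · intro h μ
    have := congrArg (coeff μ) h
    rw [coeff_map, coeff_zero] at this
    exact (residue_eq_zero_iff hπ _).1 this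
  · intro h
    ext μ
    rw [coeff_map, coeff_zero]
    exact (residue_eq_zero_iff hπ _).2 (h μ)

lemma exists_div_of_mapF_eq_zero (ρ : G →* Matrix.GeneralLinearGroup (Fin n) R) (m : ℕ)
    {π : R} (hπ : Irreducible π) {f : MvPolynomial (Fin n) R} (hf : f ∈ Ad ρ m)
    (h0 : map (residue R) f = 0) : ∃ f' ∈ Ad ρ m, f = π • f' := by
  obtain ⟨f', hf'⟩ := (mapF_eq_zero_iff hπ f).1 h0
  rw [mem_Ad] at hf
  have hπ0 : (C π : MvPolynomial (Fin n) R) ≠ 0 := fun h =>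
    hπ.ne_zero (C_injective _ _ (by rw [h, map_zero]))
  refine ⟨f', mem_Ad.2 ⟨?_, ?_⟩, by rw [hf', smul_eq_C_mul]⟩
  · rw [mem_invariantRing_iff]
    intro σ
    have h2 := (mem_invariantRing_iff _).1 hf.1 σ
    rw [hf', map_mul] at h2
    have hC : gAct (ρ σ) (C π) = C π := by
      rw [← algebraMap_eq]
      exact (gAct (ρ σ)).commutes π
    rw [hC] at h2
    exact mul_left_cancel₀ hπ0 h2
  · intro μ hμ
    apply hf.2
    rw [hf', coeff_C_mul]
    exact mul_ne_zero hπ.ne_zero hμ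

end DVRMain

section Surj
open IsLocalRing
set_option linter.unusedSectionVars false
set_option maxHeartbeats 1000000
variable {R : Type*} [CommRing R] [IsDomain R] [IsDiscreteValuationRing R] {n : ℕ}
  {G : Type*} [Group G]

lemma surj_Ad_to_F (ρ : G →* Matrix.GeneralLinearGroup (Fin n) R)
    {d : Fin n → ℕ}
    {fK : Fin n → MvPolynomial (Fin n) (FractionRing R)}
    (hKhom : ∀ i, (fK i).IsHomogeneous (d i))
    (hKind : AlgebraicIndependent (FractionRing R) fK)
    (hKadj : Algebra.adjoin (FractionRing R) (Set.range fK) =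
      invariantRing ((Matrix.GeneralLinearGroup.map (algebraMap R (FractionRing R))).comp ρ))
    {fF : Fin n → MvPolynomial (Fin n) (IsLocalRing.ResidueField R)}
    (hFhom : ∀ i, (fF i).IsHomogeneous (d i))
    (hFind : AlgebraicIndependent (IsLocalRing.ResidueField R) fF)
    (hFadj : Algebra.adjoin (IsLocalRing.ResidueField R) (Set.range fF) =
      invariantRing ((Matrix.GeneralLinearGroup.map (IsLocalRing.residue R)).comp ρ))
    (m : ℕ) {p : MvPolynomial (Fin n) (IsLocalRing.ResidueField R)}
    (hp1 : p ∈ invariantRing ((Matrix.GeneralLinearGroup.map (IsLocalRing.residue R)).comp ρ))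
    (hp2 : p.IsHomogeneous m) :
    ∃ a ∈ Ad ρ m, map (IsLocalRing.residue R) a = p := by
  classical
  obtain ⟨π, hπ⟩ := IsDiscreteValuationRing.exists_irreducible R
  set K := FractionRing R
  set F := IsLocalRing.ResidueField R
  set κ : R →+* K := algebraMap R K with hκdef
  set ψ : R →+* F := IsLocalRing.residue R with hψdef
  have hκ : Function.Injective κ := IsFractionRing.injective R K
  have hψs : Function.Surjective ψ := Ideal.Quotient.mk_surjective
  haveI : Module.Finite R ↥(Ad ρ m) := Module.Finite.iff_fg.2 (Ad_fg ρ m)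
  set ι := Module.Free.ChooseBasisIndex R ↥(Ad ρ m) with hι
  set b : Module.Basis ι R ↥(Ad ρ m) := Module.Free.chooseBasis R ↥(Ad ρ m) with hb
  set c : ι → MvPolynomial (Fin n) R := fun i => ((b i : ↥(Ad ρ m)) : MvPolynomial (Fin n) R)
    with hc
  have hcmem : ∀ i, c i ∈ Ad ρ m := fun i => (b i).2
  have hcspan : Submodule.span R (Set.range c) = Ad ρ m := by
    have h1 := congrArg (Submodule.map (Ad ρ m).subtype) b.span_eq
    rwa [Submodule.map_span, Submodule.map_top, Submodule.range_subtype,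
      ← Set.range_comp] at h1
  have hcLI : LinearIndependent R c :=
    b.linearIndependent.map' (Ad ρ m).subtype (Submodule.ker_subtype _)
  set cK : ι → MvPolynomial (Fin n) K := fun i => map κ (c i) with hcK
  set cF : ι → MvPolynomial (Fin n) F := fun i => map ψ (c i) with hcF
  -- K side
  have hcKmem : ∀ i, cK i ∈ (Subalgebra.toSubmodule (invariantRing
      ((Matrix.GeneralLinearGroup.map κ).comp ρ))) ⊓ homogeneousSubmodule (Fin n) K m := by
    intro i
    have h := mem_Ad.1 (hcmem i)
    refine Submodule.mem_inf.2 ⟨?_, (mem_homogeneousSubmodule _ _).2 (h.2.map κ)⟩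
    rw [Subalgebra.mem_toSubmodule]
    exact map_mem_invariantRing κ ρ h.1
  have hKLI : LinearIndependent K cK := by
    rw [Fintype.linearIndependent_iff]
    intro g hg
    obtain ⟨s, hs⟩ := IsLocalization.exist_integer_multiples (nonZeroDivisors R) Finset.univ g
    choose r hr using fun i => hs i (Finset.mem_univ i)
    have hs0 : κ (s : R) ≠ 0 := fun h =>
      nonZeroDivisors.ne_zero s.2 (hκ (by rw [h, map_zero]))
    have h1 : map κ (∑ i, r i • c i) = 0 := by
      rw [map_sum, Finset.sum_congr rfl (fun i _ => by rw [map_smul_eq κ (r i) (c i), hr i])]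
      have h2 : ∀ i : ι, ((s : R) • g i) • map κ (c i) = κ (s : R) • (g i • cK i) := by
        intro i
        rw [Algebra.smul_def (s : R) (g i), mul_smul]
      rw [Finset.sum_congr rfl (fun i _ => h2 i), ← Finset.smul_sum, hg, smul_zero]
    have h2 : (∑ i, r i • c i) = 0 := MvPolynomial.map_injective κ hκ (by rwa [map_zero])
    have h3 := Fintype.linearIndependent_iff.1 hcLI r h2
    intro i
    have h4 := hr i
    rw [h3 i, map_zero] at h4
    have h5 : (s : R) • g i = κ (s : R) * g i := Algebra.smul_def _ _
    rw [h5] at h4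
    rcases mul_eq_zero.1 h4.symm with h | h
    · exact absurd h hs0
    · exact h
  have hKspan : Submodule.span K (Set.range cK) =
      (Subalgebra.toSubmodule (invariantRing ((Matrix.GeneralLinearGroup.map κ).comp ρ)))
        ⊓ homogeneousSubmodule (Fin n) K m := by
    apply le_antisymm
    · rw [Submodule.span_le]
      rintro _ ⟨i, rfl⟩
      exact hcKmem i
    · intro p hp
      obtain ⟨hq1, hq2⟩ := Submodule.mem_inf.1 hp
      rw [Subalgebra.mem_toSubmodule] at hq1
      rw [mem_homogeneousSubmodule] at hq2
      obtain ⟨s, hs⟩ := IsLocalization.exist_integer_multiples (nonZeroDivisors R)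
        p.support (fun μ => coeff μ p)
      have hs0 : κ (s : R) ≠ 0 := fun h =>
        nonZeroDivisors.ne_zero s.2 (hκ (by rw [h, map_zero]))
      set p' := C (κ (s : R)) * p with hp'
      have hcoef : ∀ μ, ∃ r, κ r = coeff μ p' := by
        intro μ
        by_cases hμ : μ ∈ p.support
        · obtain ⟨r, hr⟩ := hs μ hμ
          exact ⟨r, by rw [hp', coeff_C_mul, ← Algebra.smul_def]; exact hr⟩
        · exact ⟨0, by rw [map_zero, hp', coeff_C_mul, notMem_support_iff.1 hμ, mul_zero]⟩
      obtain ⟨q, hq⟩ := exists_preimage_map κ p' hcoef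
      have hp'inv : p' ∈ invariantRing ((Matrix.GeneralLinearGroup.map κ).comp ρ) := by
        rw [mem_invariantRing_iff]
        intro σ
        rw [hp', map_mul]
        have hC : gAct (((Matrix.GeneralLinearGroup.map κ).comp ρ) σ) (C (κ (s:R)))
            = C (κ (s:R)) := by
          rw [← algebraMap_eq]
          exact (gAct _).commutes _
        rw [hC, (mem_invariantRing_iff _).1 hq1 σ]
      have hqA : q ∈ Ad ρ m := by
        rw [mem_Ad]
        constructor
        · apply mem_invariantRing_of_map κ hκ
          rw [hq]
          exact hp'inv
        · intro μ hμ
          have h1 : coeff μ p' ≠ 0 := by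
            rw [← hq, coeff_map]
            exact fun h => hμ (hκ (by rw [h, map_zero]))
          rw [hp', coeff_C_mul] at h1
          exact hq2 (fun h => h1 (by rw [h, mul_zero]))
      have hmem : map κ q ∈ Submodule.span K (Set.range cK) := by
        have hsm : ∀ x ∈ Submodule.span R (Set.range c),
            map κ x ∈ Submodule.span K (Set.range cK) := by
          intro x hx
          induction hx using Submodule.span_induction with
          | mem x hx => obtain ⟨i, rfl⟩ := hx; exact Submodule.subset_span ⟨i, rfl⟩
          | zero => rw [map_zero]; exact Submodule.zero_mem _
          | add x y _ _ hx hy => rw [map_add]; exact Submodule.add_mem _ hx hy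
          | smul r x _ hx =>
              rw [map_smul_eq]
              exact Submodule.smul_mem _ _ hx
        exact hsm q (by rw [hcspan]; exact hqA)
      have hfinal : p = (κ (s : R))⁻¹ • map κ q := by
        rw [hq, hp', ← smul_eq_C_mul, smul_smul, inv_mul_cancel₀ hs0, one_smul]
      rw [hfinal]
      exact Submodule.smul_mem _ _ hmem
  -- dimension count
  have hcardK : Fintype.card ι = Nat.card {μ : Fin n →₀ ℕ // Finsupp.weight d μ = m} := by
    have h1 := finrank_adjoin_inf_homog hKind hKhom m
    rw [hKadj] at h1
    rw [← h1, ← hKspan, finrank_span_eq_card hKLI]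
  -- F side
  have hcFmem : ∀ i, cF i ∈ (Subalgebra.toSubmodule (invariantRing
      ((Matrix.GeneralLinearGroup.map ψ).comp ρ))) ⊓ homogeneousSubmodule (Fin n) F m := by
    intro i
    have h := mem_Ad.1 (hcmem i)
    refine Submodule.mem_inf.2 ⟨?_, (mem_homogeneousSubmodule _ _).2 (h.2.map ψ)⟩
    rw [Subalgebra.mem_toSubmodule]
    exact map_mem_invariantRing ψ ρ h.1
  have hψπ : ψ π = 0 := (residue_eq_zero_iff hπ π).2 dvd_rfl
  have hFLI : LinearIndependent F cF := by
    rw [Fintype.linearIndependent_iff]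
    intro g hg
    choose r hr using fun i => hψs (g i)
    set u : ↥(Ad ρ m) := ∑ i, r i • b i with hu
    have hucoe : (u : MvPolynomial (Fin n) R) = ∑ i, r i • c i := by
      simp [hu, hc]
    have hmap0 : map ψ (u : MvPolynomial (Fin n) R) = 0 := by
      rw [hucoe, map_sum, Finset.sum_congr rfl (fun i _ => by rw [map_smul_eq ψ, hr i])]
      exact hg
    obtain ⟨f', hf', hdiv⟩ := exists_div_of_mapF_eq_zero ρ m hπ u.2 hmap0
    set u' : ↥(Ad ρ m) := (⟨f', hf'⟩ : ↥(Ad ρ m)) with hu'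
    have huu : u = π • u' := Subtype.ext hdiv
    have hsum2 : ∑ i, r i • b i = ∑ i, (π * b.repr u' i) • b i := by
      calc ∑ i, r i • b i = u := hu.symm
        _ = π • u' := huu
        _ = π • ∑ i, b.repr u' i • b i := by rw [b.sum_repr u']
        _ = ∑ i, (π * b.repr u' i) • b i := by
            rw [Finset.smul_sum]
            exact Finset.sum_congr rfl fun i _ => (smul_smul _ _ _)
    have h6 := Fintype.linearIndependent_iff.1 b.linearIndependent
      (fun i => r i - π * b.repr u' i) (by
        rw [Finset.sum_congr rfl (fun i _ => sub_smul (r i) (π * b.repr u' i) (b i)),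
          Finset.sum_sub_distrib, ← hsum2, sub_self])
    intro i
    have h7 : r i = π * b.repr u' i := sub_eq_zero.1 (h6 i)
    rw [← hr i, h7, map_mul, hψπ, zero_mul]
  -- F span
  haveI hFD1 : FiniteDimensional F ↥(homogeneousSubmodule (Fin n) F m) :=
    Module.Finite.iff_fg.2 (homogeneousSubmodule_fg m)
  haveI hFD : FiniteDimensional F ↥((Subalgebra.toSubmodule (invariantRing
      ((Matrix.GeneralLinearGroup.map ψ).comp ρ))) ⊓ homogeneousSubmodule (Fin n) F m) :=
    Submodule.finiteDimensional_of_le inf_le_right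
  have hFspan : Submodule.span F (Set.range cF) =
      (Subalgebra.toSubmodule (invariantRing ((Matrix.GeneralLinearGroup.map ψ).comp ρ)))
        ⊓ homogeneousSubmodule (Fin n) F m := by
    have hle : Submodule.span F (Set.range cF) ≤
        (Subalgebra.toSubmodule (invariantRing ((Matrix.GeneralLinearGroup.map ψ).comp ρ)))
          ⊓ homogeneousSubmodule (Fin n) F m := by
      rw [Submodule.span_le]
      rintro _ ⟨i, rfl⟩
      exact hcFmem i
    apply Submodule.eq_of_le_of_finrank_le hle
    have h1 := finrank_adjoin_inf_homog hFind hFhom m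
    rw [hFadj] at h1
    rw [h1, finrank_span_eq_card hFLI, ← hcardK]
  -- conclude
  have hpmem : p ∈ Submodule.span F (Set.range cF) := by
    rw [hFspan]
    refine Submodule.mem_inf.2 ⟨?_, (mem_homogeneousSubmodule _ _).2 hp2⟩
    rw [Subalgebra.mem_toSubmodule]
    exact hp1
  obtain ⟨g, hg⟩ := (Submodule.mem_span_range_iff_exists_fun F).1 hpmem
  choose r hr using fun i => hψs (g i)
  refine ⟨∑ i, r i • c i,
    Submodule.sum_mem _ (fun i _ => Submodule.smul_mem _ _ (hcmem i)), ?_⟩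
  rw [map_sum, Finset.sum_congr rfl (fun i _ => by rw [map_smul_eq ψ, hr i])]
  exact hg

end Surj



set_option maxHeartbeats 1000000 in
/-- If the invariant rings over the fraction field and over the residue field of a DVR are
polynomial rings with generators of the same degrees, then the invariant ring over the DVR
is a polynomial ring. -/
theorem stmt13 {R : Type*} [CommRing R] [IsDomain R] [IsDiscreteValuationRing R] {n : ℕ}
    {G : Type*} [Group G] [Finite G]
    (ρ : G →* Matrix.GeneralLinearGroup (Fin n) R)
    (hsame : ∃ d : Fin n → ℕ,
      (∃ fK : Fin n → MvPolynomial (Fin n) (FractionRing R),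
        (∀ i, fK i ∈ invariantRing
          ((Matrix.GeneralLinearGroup.map (algebraMap R (FractionRing R))).comp ρ)) ∧
        (∀ i, (fK i).IsHomogeneous (d i)) ∧
        AlgebraicIndependent (FractionRing R) fK ∧
        Algebra.adjoin (FractionRing R) (Set.range fK) =
          invariantRing
            ((Matrix.GeneralLinearGroup.map (algebraMap R (FractionRing R))).comp ρ)) ∧
      (∃ fF : Fin n → MvPolynomial (Fin n) (IsLocalRing.ResidueField R),
        (∀ i, fF i ∈ invariantRing
          ((Matrix.GeneralLinearGroup.map (IsLocalRing.residue R)).comp ρ)) ∧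
        (∀ i, (fF i).IsHomogeneous (d i)) ∧
        AlgebraicIndependent (IsLocalRing.ResidueField R) fF ∧
        Algebra.adjoin (IsLocalRing.ResidueField R) (Set.range fF) =
          invariantRing
            ((Matrix.GeneralLinearGroup.map (IsLocalRing.residue R)).comp ρ))) :
    ∃ (e : Fin n → ℕ) (g : Fin n → MvPolynomial (Fin n) R),
      (∀ i, g i ∈ invariantRing ρ) ∧ (∀ i, (g i).IsHomogeneous (e i)) ∧
      AlgebraicIndependent R g ∧
      Algebra.adjoin R (Set.range g) = invariantRing ρ := by
  classical
  obtain ⟨d, ⟨fK, hKmem, hKhom, hKind, hKadj⟩, ⟨fF, hFmem, hFhom, hFind, hFadj⟩⟩ := hsame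
  rcases isEmpty_or_nonempty (Fin n) with hn | hn
  · -- trivial case n = 0
    refine ⟨fun _ => 0, fun _ => 0, fun i => hn.elim i, fun i => hn.elim i, ?_, ?_⟩
    · rw [algebraicIndependent_empty_type_iff]
      rw [algebraMap_eq]
      exact C_injective _ _
    · apply le_antisymm
      · apply Algebra.adjoin_le
        rintro _ ⟨i, rfl⟩
        exact hn.elim i
      · intro x hx
        obtain ⟨r, rfl⟩ := C_surjective (Fin n) x
        rw [← algebraMap_eq]
        exact Subalgebra.algebraMap_mem _ r
  · obtain ⟨π, hπ⟩ := IsDiscreteValuationRing.exists_irreducible R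
    have hπC : (C π : MvPolynomial (Fin n) R) ≠ 0 := fun h =>
      hπ.ne_zero (C_injective _ _ (by rw [h, map_zero]))
    have hd : ∀ i, 0 < d i := pos_deg hKind hKhom
    have hsurj := surj_Ad_to_F ρ hKhom hKind hKadj hFhom hFind hFadj
    have hex : ∀ i : Fin n, ∃ a ∈ Ad ρ (d i), map (IsLocalRing.residue R) a = fF i :=
      fun i => hsurj (d i) (hFmem i) (hFhom i)
    choose g hgA hgF using hex
    have hginv : ∀ i, g i ∈ invariantRing ρ := fun i => (mem_Ad.1 (hgA i)).1
    have hghom : ∀ i, (g i).IsHomogeneous (d i) := fun i => (mem_Ad.1 (hgA i)).2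
    have hcomm : ∀ Q : MvPolynomial (Fin n) R,
        map (IsLocalRing.residue R) (aeval g Q) = aeval fF (map (IsLocalRing.residue R) Q) := by
      intro Q
      rw [map_aeval_eq]
      have hfun : (fun i => map (IsLocalRing.residue R) (g i)) = fF := funext hgF
      rw [hfun]
    have hmapprod : ∀ μ : Fin n →₀ ℕ,
        map (IsLocalRing.residue R) (∏ i, g i ^ μ i) = ∏ i, fF i ^ μ i := by
      intro μ
      rw [map_prod]
      exact Finset.prod_congr rfl fun i _ => by rw [map_pow, hgF i]
    refine ⟨d, g, hginv, hghom, ?_, ?_⟩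
    · -- algebraic independence
      rw [algebraicIndependent_iff]
      intro P hP
      have key : ∀ m : ℕ, ∀ Q : MvPolynomial (Fin n) R, aeval g Q = 0 →
          ∀ μ, π ^ m ∣ coeff μ Q := by
        intro m
        induction m with
        | zero => intro Q _ μ; simpa using one_dvd _
        | succ m ih =>
          intro Q hQ μ
          have h1 : map (IsLocalRing.residue R) Q = 0 := by
            apply hFind.eq_zero_of_aeval_eq_zero
            rw [← hcomm, hQ, map_zero]
          obtain ⟨Q', hQ'⟩ := (mapF_eq_zero_iff hπ Q).1 h1
          have hQ'0 : aeval g Q' = 0 := by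
            have h2 : C π * aeval g Q' = 0 := by
              have h3 : aeval g (C π * Q') = C π * aeval g Q' := by
                rw [map_mul, aeval_C, algebraMap_eq]
              rw [← h3, ← hQ', hQ]
            rcases mul_eq_zero.1 h2 with h | h
            · exact absurd h hπC
            · exact h
          obtain ⟨t, ht⟩ := ih Q' hQ'0 μ
          refine ⟨t, ?_⟩
          rw [hQ', coeff_C_mul, ht, pow_succ, mul_comm (π ^ m) π, mul_assoc]
      by_contra hP0
      obtain ⟨μ, hμ⟩ := exists_coeff_ne_zero hP0
      obtain ⟨m0, u, hu⟩ := IsDiscreteValuationRing.eq_unit_mul_pow_irreducible hμ hπ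
      obtain ⟨t, ht⟩ := key (m0 + 1) P hP μ
      rw [hu] at ht
      have h5 : (u : R) = π * t := by
        have h6 : π ^ m0 * (u : R) = π ^ m0 * (π * t) := by
          calc π ^ m0 * (u : R) = (u : R) * π ^ m0 := mul_comm _ _
            _ = π ^ (m0 + 1) * t := ht
            _ = π ^ m0 * (π * t) := by rw [pow_succ]; ring
        exact mul_left_cancel₀ (pow_ne_zero _ hπ.ne_zero) h6
      exact hπ.not_isUnit (isUnit_of_dvd_unit ⟨t, h5⟩ u.isUnit)
    · -- adjoin eq
      apply le_antisymm
      · apply Algebra.adjoin_le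
        rintro _ ⟨i, rfl⟩
        exact hginv i
      · intro f hf
        have hAd : ∀ m : ℕ, Ad ρ m ≤
            Subalgebra.toSubmodule (Algebra.adjoin R (Set.range g)) := by
          intro m
          apply Submodule.le_of_le_smul_of_le_jacobson_bot (I := Ideal.span {π}) (Ad_fg ρ m)
          · rw [IsLocalRing.jacobson_eq_maximalIdeal ⊥ bot_ne_top]
            exact ((IsDiscreteValuationRing.irreducible_iff_uniformizer π).1 hπ).ge
          · intro a ha
            -- mapF a lies in the span of monomials in fF
            have hmem1 : map (IsLocalRing.residue R) a ∈
                Submodule.span (IsLocalRing.ResidueField R)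
                  ((fun μ => ∏ i, fF i ^ μ i) ''
                    {μ : Fin n →₀ ℕ | Finsupp.weight d μ = m}) := by
              rw [← adjoin_inf_homog_eq_span hFhom m]
              have h := mem_Ad.1 ha
              refine Submodule.mem_inf.2 ⟨?_, (mem_homogeneousSubmodule _ _).2
                (h.2.map (IsLocalRing.residue R))⟩
              rw [Subalgebra.mem_toSubmodule, hFadj]
              exact map_mem_invariantRing _ ρ h.1
            haveI hfin2 : Finite ↑{μ : Fin n →₀ ℕ | Finsupp.weight d μ = m} :=
              finite_weight_eq hd m
            cases nonempty_fintype ↑{μ : Fin n →₀ ℕ | Finsupp.weight d μ = m}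
            rw [Set.image_eq_range _ _] at hmem1
            obtain ⟨w, hw⟩ := (Submodule.mem_span_range_iff_exists_fun _).1 hmem1
            choose t ht using fun μ => IsLocalRing.residue_surjective (R := R) (w μ)
            set y : MvPolynomial (Fin n) R :=
              ∑ μ : ↑{μ : Fin n →₀ ℕ | Finsupp.weight d μ = m}, t μ • ∏ i, g i ^ μ.1 i with hy
            have hyAd : y ∈ Ad ρ m := by
              apply Submodule.sum_mem
              intro μ _
              apply Submodule.smul_mem
              apply mem_Ad.2
              constructor
              · exact Subalgebra.prod_mem _ fun i _ => pow_mem (hginv i) _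
              · have h8 := prod_pow_isHomogeneous hghom μ.1
                rwa [(μ.2 : Finsupp.weight d μ.1 = m)] at h8
            have hyB : y ∈ Subalgebra.toSubmodule (Algebra.adjoin R (Set.range g)) := by
              apply Submodule.sum_mem
              intro μ _
              apply Submodule.smul_mem
              rw [Subalgebra.mem_toSubmodule]
              exact Subalgebra.prod_mem _ fun i _ =>
                pow_mem (Algebra.subset_adjoin (Set.mem_range_self i)) _
            have hmy : map (IsLocalRing.residue R) y = map (IsLocalRing.residue R) a := by
              rw [hy, map_sum]
              rw [Finset.sum_congr rfl (fun μ _ => by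
                rw [map_smul_eq, hmapprod μ.1,
                  show IsLocalRing.residue R (t μ) = w μ from ht μ])]
              exact hw
            have hsub : a - y ∈ Ad ρ m := Submodule.sub_mem _ ha hyAd
            obtain ⟨z, hz, hdiv⟩ := exists_div_of_mapF_eq_zero ρ m hπ hsub
              (by rw [map_sub, hmy, sub_self])
            have ha2 : a = y + π • z := by
              rw [← hdiv]
              abel
            rw [ha2]
            apply Submodule.add_mem
            · exact Submodule.mem_sup_left hyB
            · exact Submodule.mem_sup_right (Submodule.smul_mem_smul
                (Ideal.mem_span_singleton_self π) hz)
        rw [← sum_homogeneousComponent f]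
        apply Subalgebra.sum_mem
        intro j _
        exact hAd j (mem_Ad.2 ⟨homogeneousComponent_mem_invariantRing ρ hf j,
          homogeneousComponent_isHomogeneous j f⟩)
end

section
/- Consider R = ℤ_(3) (integers localized at 3) and G = S_3 acting on R[x,y] via the representation sending the transpositions (1 2) and (2 3) to the matrices [[1,3],[0,−1]] and [[−2,−3],[1,2]] respectively. Then ℚ[x,y]^G = ℚ[f,g] with f = x²+3xy+3y² and g = 2x³+9x²y+9xy², the element h := (g²−4f³)/27 lies in R[x,y]^G, and R[x,y]^G is not equal to R[f,g]; in particular R[x,y]^G is not a polynomial ring generated by f and g. -/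
open MvPolynomial

instance : (Ideal.span {(3 : ℤ)}).IsPrime := by
  rw [Ideal.span_singleton_prime (by norm_num)]
  exact Int.prime_three

/-- `ℤ_(3)`, the integers localized at the prime `3`. -/
noncomputable abbrev Zloc3 : Type := Localization.AtPrime (Ideal.span {(3 : ℤ)})

/-- The matrix `[[1,3],[0,-1]]` (image of the transposition `(1 2)`). -/
noncomputable def M1 (A : Type*) [CommRing A] : Matrix.GeneralLinearGroup (Fin 2) A :=
  ⟨!![1, 3; 0, -1], !![1, 3; 0, -1],
    by rw [Matrix.mul_fin_two, Matrix.one_fin_two]; norm_num,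
    by rw [Matrix.mul_fin_two, Matrix.one_fin_two]; norm_num⟩

/-- The matrix `[[-2,-3],[1,2]]` (image of the transposition `(2 3)`). -/
noncomputable def M2 (A : Type*) [CommRing A] : Matrix.GeneralLinearGroup (Fin 2) A :=
  ⟨!![-2, -3; 1, 2], !![-2, -3; 1, 2],
    by rw [Matrix.mul_fin_two, Matrix.one_fin_two]; norm_num,
    by rw [Matrix.mul_fin_two, Matrix.one_fin_two]; norm_num⟩

/-- `f = x² + 3xy + 3y²`. -/
noncomputable def fpoly (A : Type*) [CommRing A] : MvPolynomial (Fin 2) A :=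
  X 0 ^ 2 + 3 * X 0 * X 1 + 3 * X 1 ^ 2

/-- `g = 2x³ + 9x²y + 9xy²`. -/
noncomputable def gpoly (A : Type*) [CommRing A] : MvPolynomial (Fin 2) A :=
  2 * X 0 ^ 3 + 9 * X 0 ^ 2 * X 1 + 9 * X 0 * X 1 ^ 2


section Aux

open Equiv

lemma gAct_mul {R : Type*} [CommRing R] {n : ℕ} (M N : Matrix.GeneralLinearGroup (Fin n) R) :
    gAct (M * N) = (gAct M).comp (gAct N) := by
  apply algHom_ext
  intro i
  simp only [gAct, aeval_X, AlgHom.comp_apply, map_sum, map_mul, aeval_C, aeval_X,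
    algebraMap_eq, mul_inv_rev]
  simp only [Finset.mul_sum, ← mul_assoc, ← C_mul]
  rw [Finset.sum_comm]
  congr 1
  funext j
  simp [Units.val_mul, Matrix.mul_apply, map_sum, Finset.sum_mul]

lemma gAct_one {R : Type*} [CommRing R] {n : ℕ} :
    gAct (1 : Matrix.GeneralLinearGroup (Fin n) R) = AlgHom.id R _ := by
  apply algHom_ext
  intro i
  simp [gAct, Matrix.one_apply]

lemma perm3_cases (σ : Equiv.Perm (Fin 3)) :
    σ = 1 ∨ σ = Equiv.swap 0 1 ∨ σ = Equiv.swap 1 2 ∨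
    σ = Equiv.swap 0 1 * Equiv.swap 1 2 ∨ σ = Equiv.swap 1 2 * Equiv.swap 0 1 ∨
    σ = Equiv.swap 0 1 * (Equiv.swap 1 2 * Equiv.swap 0 1) := by
  revert σ; decide

lemma mem_invariantRing {R : Type*} [CommRing R] {n : ℕ} {G : Type*} [Group G]
    (ρ : G →* Matrix.GeneralLinearGroup (Fin n) R) (p : MvPolynomial (Fin n) R) :
    p ∈ invariantRing ρ ↔ ∀ σ : G, gAct (ρ σ) p = p := by
  simp [invariantRing, Algebra.mem_iInf, AlgHom.mem_equalizer]

lemma fix_of_gen {R : Type*} [CommRing R] {n : ℕ}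
    (ρ : Equiv.Perm (Fin 3) →* Matrix.GeneralLinearGroup (Fin n) R)
    (p : MvPolynomial (Fin n) R)
    (h1 : gAct (ρ (Equiv.swap 0 1)) p = p) (h2 : gAct (ρ (Equiv.swap 1 2)) p = p)
    (σ : Equiv.Perm (Fin 3)) : gAct (ρ σ) p = p := by
  rcases perm3_cases σ with rfl | rfl | rfl | rfl | rfl | rfl <;>
    simp [map_mul, gAct_mul, map_one, gAct_one, AlgHom.comp_apply, h1, h2]

/-- `h = (g² - 4f³)/27 = -(x⁴y² + 6x³y³ + 13x²y⁴ + 12xy⁵ + 4y⁶)`. -/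
noncomputable def hpoly (A : Type*) [CommRing A] : MvPolynomial (Fin 2) A :=
  -(X 0 ^ 4 * X 1 ^ 2 + 6 * X 0 ^ 3 * X 1 ^ 3 + 13 * X 0 ^ 2 * X 1 ^ 4
    + 12 * X 0 * X 1 ^ 5 + 4 * X 1 ^ 6)

lemma gAct_M1 (A : Type*) [CommRing A] :
    gAct (M1 A) = aeval ![X 0 + 3 * X 1, -X 1] := by
  have hinv : (M1 A)⁻¹ = M1 A := Units.ext rfl
  apply algHom_ext
  intro i
  simp only [gAct, aeval_X, hinv]
  fin_cases i <;>
    simp [M1, Fin.sum_univ_two, C_1, map_ofNat, C_neg]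

lemma gAct_M2 (A : Type*) [CommRing A] :
    gAct (M2 A) = aeval ![-(2 * X 0) - 3 * X 1, X 0 + 2 * X 1] := by
  have hinv : (M2 A)⁻¹ = M2 A := Units.ext rfl
  apply algHom_ext
  intro i
  simp only [gAct, aeval_X, hinv]
  fin_cases i <;>
    · simp [M2, Fin.sum_univ_two, map_ofNat, C_neg]
      try ring

lemma gAct_M1_f (A : Type*) [CommRing A] : gAct (M1 A) (fpoly A) = fpoly A := by
  simp only [gAct_M1, fpoly, map_add, map_mul, map_pow, map_ofNat, aeval_X]
  simp only [Matrix.cons_val_zero, Matrix.cons_val_one, Matrix.head_cons]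
  ring

lemma gAct_M2_f (A : Type*) [CommRing A] : gAct (M2 A) (fpoly A) = fpoly A := by
  simp only [gAct_M2, fpoly, map_add, map_mul, map_pow, map_ofNat, aeval_X]
  simp only [Matrix.cons_val_zero, Matrix.cons_val_one, Matrix.head_cons]
  ring

lemma gAct_M1_g (A : Type*) [CommRing A] : gAct (M1 A) (gpoly A) = gpoly A := by
  simp only [gAct_M1, gpoly, map_add, map_mul, map_pow, map_ofNat, aeval_X]
  simp only [Matrix.cons_val_zero, Matrix.cons_val_one, Matrix.head_cons]
  ring

lemma gAct_M2_g (A : Type*) [CommRing A] : gAct (M2 A) (gpoly A) = gpoly A := by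
  simp only [gAct_M2, gpoly, map_add, map_mul, map_pow, map_ofNat, aeval_X]
  simp only [Matrix.cons_val_zero, Matrix.cons_val_one, Matrix.head_cons]
  ring

lemma gAct_M1_h (A : Type*) [CommRing A] : gAct (M1 A) (hpoly A) = hpoly A := by
  simp only [gAct_M1, hpoly, map_add, map_mul, map_pow, map_ofNat, map_neg, aeval_X]
  simp only [Matrix.cons_val_zero, Matrix.cons_val_one, Matrix.head_cons]
  ring

lemma gAct_M2_h (A : Type*) [CommRing A] : gAct (M2 A) (hpoly A) = hpoly A := by
  simp only [gAct_M2, hpoly, map_add, map_mul, map_pow, map_ofNat, map_neg, aeval_X]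
  simp only [Matrix.cons_val_zero, Matrix.cons_val_one, Matrix.head_cons]
  ring

lemma hpoly_spec (A : Type*) [CommRing A] :
    27 * hpoly A = gpoly A ^ 2 - 4 * fpoly A ^ 3 := by
  simp only [hpoly, gpoly, fpoly]; ring

lemma map_M1 {A B : Type*} [CommRing A] [CommRing B] (φ : A →+* B) :
    Matrix.GeneralLinearGroup.map φ (M1 A) = M1 B := by
  apply Units.ext
  show (M1 A).val.map φ = (M1 B).val
  ext i j
  fin_cases i <;> fin_cases j <;> simp [M1, map_ofNat]

lemma map_M2 {A B : Type*} [CommRing A] [CommRing B] (φ : A →+* B) :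
    Matrix.GeneralLinearGroup.map φ (M2 A) = M2 B := by
  apply Units.ext
  show (M2 A).val.map φ = (M2 B).val
  ext i j
  fin_cases i <;> fin_cases j <;> simp [M2, map_ofNat]

lemma esymm2 (K : Type*) [CommRing K] :
    esymm (Fin 3) K 2 = X 0 * X 1 + (X 0 * X 2 + X 1 * X 2) := by
  rw [esymm, show (Finset.powersetCard 2 (Finset.univ : Finset (Fin 3))) = {{0,1},{0,2},{1,2}}
    from by decide]
  rw [show ({{0,1},{0,2},{1,2}} : Finset (Finset (Fin 3)))
      = insert {0,1} (insert {0,2} {{1,2}}) from rfl]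
  rw [Finset.sum_insert (by decide), Finset.sum_insert (by decide), Finset.sum_singleton]
  rw [show ({0,1} : Finset (Fin 3)) = insert 0 {1} from rfl,
    Finset.prod_insert (by decide), Finset.prod_singleton]
  rw [show ({0,2} : Finset (Fin 3)) = insert 0 {2} from rfl,
    Finset.prod_insert (by decide), Finset.prod_singleton]
  rw [show ({1,2} : Finset (Fin 3)) = insert 1 {2} from rfl,
    Finset.prod_insert (by decide), Finset.prod_singleton]

lemma esymm3 (K : Type*) [CommRing K] :
    esymm (Fin 3) K 3 = X 0 * (X 1 * X 2) := by
  rw [esymm, show (Finset.powersetCard 3 (Finset.univ : Finset (Fin 3))) = {{0,1,2}}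
    from by decide, Finset.sum_singleton]
  rw [show ({0,1,2} : Finset (Fin 3)) = insert 0 (insert 1 {2}) from rfl,
    Finset.prod_insert (by decide), Finset.prod_insert (by decide), Finset.prod_singleton]

/-- Main part 1 lemma, stated for a general char-zero field `K`. -/
theorem part1 (K : Type*) [Field K] [CharZero K]
    (ρK : Equiv.Perm (Fin 3) →* Matrix.GeneralLinearGroup (Fin 2) K)
    (h12 : ρK (Equiv.swap 0 1) = M1 K) (h23 : ρK (Equiv.swap 1 2) = M2 K) :
    invariantRing ρK = Algebra.adjoin K {fpoly K, gpoly K} := by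
  have h3ne : (3 : K) ≠ 0 := by norm_num
  have h6ne : (6 : K) ≠ 0 := by norm_num
  set L : Fin 3 → MvPolynomial (Fin 2) K :=
    ![X 0 + 3 * X 1, X 0, -(2 * X 0 + 3 * X 1)] with hL
  set π : MvPolynomial (Fin 3) K →ₐ[K] MvPolynomial (Fin 2) K := aeval L with hπ
  set sec : MvPolynomial (Fin 2) K →ₐ[K] MvPolynomial (Fin 3) K :=
    aeval ![X 1, C (3 : K)⁻¹ * (X 0 - X 1)] with hsec
  have hπs : ∀ p, π (sec p) = p := by
    intro p
    have : π.comp sec = AlgHom.id K _ := by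
      apply algHom_ext
      intro i
      fin_cases i
      · simp [hπ, hsec, hL]
      · simp [hπ, hsec, hL]
        rw [← map_ofNat (C : K →+* MvPolynomial (Fin 2) K) 3, ← mul_assoc, ← C_mul,
          inv_mul_cancel₀ h3ne, C_1, one_mul]
    exact DFunLike.congr_fun this p
  have int1 : ∀ Q, π (rename ⇑(Equiv.swap (0:Fin 3) 1) Q) = gAct (M1 K) (π Q) := by
    intro Q
    have : π.comp (rename ⇑(Equiv.swap (0:Fin 3) 1)) = (gAct (M1 K)).comp π := by
      apply algHom_ext
      intro i
      rw [gAct_M1]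
      fin_cases i <;>
        · simp [hπ, hL, Equiv.swap_apply_def, map_ofNat]
          try ring
    exact DFunLike.congr_fun this Q
  have int2 : ∀ Q, π (rename ⇑(Equiv.swap (1:Fin 3) 2) Q) = gAct (M2 K) (π Q) := by
    intro Q
    have : π.comp (rename ⇑(Equiv.swap (1:Fin 3) 2)) = (gAct (M2 K)).comp π := by
      apply algHom_ext
      intro i
      rw [gAct_M2]
      fin_cases i <;>
        · simp [hπ, hL, Equiv.swap_apply_def, map_ofNat]
          try ring
    exact DFunLike.congr_fun this Q
  have intmul : ∀ (σ τ : Equiv.Perm (Fin 3)),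
      (∀ Q, π (rename ⇑σ Q) = gAct (ρK σ) (π Q)) →
      (∀ Q, π (rename ⇑τ Q) = gAct (ρK τ) (π Q)) →
      ∀ Q, π (rename ⇑(σ * τ) Q) = gAct (ρK (σ * τ)) (π Q) := by
    intro σ τ hσ hτ Q
    rw [Equiv.Perm.coe_mul, ← rename_rename, hσ, hτ, map_mul, gAct_mul]
    rfl
  have intall : ∀ (σ : Equiv.Perm (Fin 3)) Q, π (rename ⇑σ Q) = gAct (ρK σ) (π Q) := by
    have i1 : ∀ Q, π (rename ⇑(Equiv.swap (0:Fin 3) 1) Q)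
        = gAct (ρK (Equiv.swap 0 1)) (π Q) := by rw [h12]; exact int1
    have i2 : ∀ Q, π (rename ⇑(Equiv.swap (1:Fin 3) 2) Q)
        = gAct (ρK (Equiv.swap 1 2)) (π Q) := by rw [h23]; exact int2
    intro σ
    rcases perm3_cases σ with rfl | rfl | rfl | rfl | rfl | rfl
    · intro Q; rw [map_one, gAct_one]; simp [Equiv.Perm.coe_one]
    · exact i1
    · exact i2
    · exact intmul _ _ i1 i2
    · exact intmul _ _ i2 i1
    · exact intmul _ _ i1 (intmul _ _ i2 i1)
  apply le_antisymm
  · -- invariants are contained in K[f,g]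
    intro P hP
    rw [mem_invariantRing] at hP
    set Q : MvPolynomial (Fin 3) K :=
      C (6 : K)⁻¹ * ∑ σ : Equiv.Perm (Fin 3), rename ⇑σ (sec P) with hQ
    have hQsym : Q.IsSymmetric := by
      intro τ
      rw [hQ, map_mul, rename_C, map_sum]
      congr 1
      have : ∀ σ : Equiv.Perm (Fin 3),
          rename ⇑τ (rename ⇑σ (sec P)) = rename ⇑(τ * σ) (sec P) := by
        intro σ; rw [rename_rename, Equiv.Perm.coe_mul]
      simp_rw [this]
      exact Fintype.sum_bijective (τ * ·) (Group.mulLeft_bijective τ) _ _ (fun σ => rfl)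
    have hπQ : π Q = P := by
      rw [hQ, map_mul, map_sum]
      have hC : π (C (6:K)⁻¹) = C (6:K)⁻¹ := by simp [hπ]
      simp_rw [intall, hπs P]
      simp_rw [fun σ => hP σ]
      rw [hC, Finset.sum_const, Finset.card_univ,
        show Fintype.card (Equiv.Perm (Fin 3)) = 6 from by
          rw [Fintype.card_perm]; rfl,
        nsmul_eq_mul, ← mul_assoc, ← C_eq_coe_nat, ← C_mul]
      norm_num
    obtain ⟨p, hp⟩ := esymmAlgHom_surjective (σ := Fin 3) (n := 3) K (by simp) ⟨Q, hQsym⟩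
    have hQp : Q = aeval (fun i : Fin 3 => esymm (Fin 3) K (i + 1)) p := by
      have := congrArg Subtype.val hp
      rw [esymmAlgHom_apply] at this
      exact this.symm
    have hPp : P = aeval (fun i : Fin 3 => π (esymm (Fin 3) K (i + 1))) p := by
      rw [← hπQ, hQp, ← AlgHom.comp_apply, comp_aeval]
    have hrange : P ∈ Algebra.adjoin K
        (Set.range fun i : Fin 3 => π (esymm (Fin 3) K (i + 1))) := by
      rw [Algebra.adjoin_range_eq_range_aeval]
      exact ⟨p, hPp.symm⟩
    refine Algebra.adjoin_le ?_ hrange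
    rintro _ ⟨i, rfl⟩
    have hf : fpoly K ∈ Algebra.adjoin K {fpoly K, gpoly K} :=
      Algebra.subset_adjoin (Set.mem_insert _ _)
    have hg : gpoly K ∈ Algebra.adjoin K {fpoly K, gpoly K} :=
      Algebra.subset_adjoin (Set.mem_insert_of_mem _ rfl)
    fin_cases i
    · show π (esymm (Fin 3) K 1) ∈ (Algebra.adjoin K {fpoly K, gpoly K} : Set _)
      rw [SetLike.mem_coe]
      have : π (esymm (Fin 3) K 1) = 0 := by
        rw [esymm_one, Fin.sum_univ_three]
        simp [hπ, hL, map_ofNat]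
        ring
      rw [this]; exact zero_mem _
    · show π (esymm (Fin 3) K 2) ∈ (Algebra.adjoin K {fpoly K, gpoly K} : Set _)
      rw [SetLike.mem_coe]
      have : π (esymm (Fin 3) K 2) = C (-3 : K) * fpoly K := by
        rw [esymm2]
        simp [hπ, hL, fpoly, map_ofNat, map_neg]
        ring
      rw [this]
      exact mul_mem (by rw [← algebraMap_eq]; exact Subalgebra.algebraMap_mem _ _) hf
    · show π (esymm (Fin 3) K 3) ∈ (Algebra.adjoin K {fpoly K, gpoly K} : Set _)
      rw [SetLike.mem_coe]
      have : π (esymm (Fin 3) K 3) = C (-1 : K) * gpoly K := by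
        rw [esymm3]
        simp [hπ, hL, gpoly, map_ofNat, map_neg, map_one]
        ring
      rw [this]
      exact mul_mem (by rw [← algebraMap_eq]; exact Subalgebra.algebraMap_mem _ _) hg
  · -- K[f,g] is contained in the invariants
    apply Algebra.adjoin_le
    rintro x hx
    rcases hx with rfl | rfl
    · rw [SetLike.mem_coe, mem_invariantRing]
      exact fix_of_gen ρK _ (by rw [h12]; exact gAct_M1_f K) (by rw [h23]; exact gAct_M2_f K)
    · rw [SetLike.mem_coe, mem_invariantRing]
      exact fix_of_gen ρK _ (by rw [h12]; exact gAct_M1_g K) (by rw [h23]; exact gAct_M2_g K)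

/-- The residue map `ℤ_(3) → ℤ/3`. -/
noncomputable def rres : Zloc3 →+* ZMod 3 :=
  IsLocalization.lift (M := (Ideal.span {(3 : ℤ)}).primeCompl)
    (g := Int.castRingHom (ZMod 3)) (by
      rintro ⟨y, hy⟩
      simp only [Int.coe_castRingHom]
      rw [isUnit_iff_ne_zero, Ne, ZMod.intCast_zmod_eq_zero_iff_dvd]
      intro hdvd
      exact hy (Ideal.mem_span_singleton.2 (by exact_mod_cast hdvd)))

lemma hpoly_not_mem : hpoly Zloc3 ∉ Algebra.adjoin Zloc3 {fpoly Zloc3, gpoly Zloc3} := by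
  intro hmem
  letI : Algebra Zloc3 (Polynomial (ZMod 3)) := ((Polynomial.C).comp rres).toAlgebra
  have halg : ∀ a : Zloc3, algebraMap Zloc3 (Polynomial (ZMod 3)) a = Polynomial.C (rres a) :=
    fun a => rfl
  let ψ : MvPolynomial (Fin 2) Zloc3 →ₐ[Zloc3] Polynomial (ZMod 3) :=
    aeval ![0, Polynomial.X]
  have h3 : (3 : Polynomial (ZMod 3)) = 0 := by
    have := CharP.cast_eq_zero (Polynomial (ZMod 3)) 3
    exact_mod_cast this
  have hψf : ψ (fpoly Zloc3) = 0 := by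
    simp [ψ, fpoly, h3]
  have hψg : ψ (gpoly Zloc3) = 0 := by
    simp [ψ, gpoly]
  have hψh : ψ (hpoly Zloc3) ∈ (⊥ : Subalgebra Zloc3 (Polynomial (ZMod 3))) := by
    have : ψ (hpoly Zloc3) ∈ (Algebra.adjoin Zloc3 {fpoly Zloc3, gpoly Zloc3}).map ψ :=
      ⟨_, hmem, rfl⟩
    rw [AlgHom.map_adjoin] at this
    refine (Algebra.adjoin_le ?_) this
    rintro x hx
    simp only [Set.image_insert_eq, Set.image_singleton, hψf, hψg] at hx
    rcases hx with rfl | rfl <;> exact zero_mem ⊥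
  rw [Algebra.mem_bot] at hψh
  obtain ⟨c, hc⟩ := hψh
  rw [halg] at hc
  have hcoeff := congrArg (fun q => Polynomial.coeff q 6) hc
  simp only [Polynomial.coeff_C] at hcoeff
  have : ψ (hpoly Zloc3) = -(4 * Polynomial.X ^ 6) := by
    simp [ψ, hpoly]
  rw [this] at hcoeff
  simp [Polynomial.coeff_X_pow] at hcoeff
  have : (4 : ZMod 3) ≠ 0 := by decide
  exact this hcoeff

end Aux


/-- The example of Mundelius: for `R = ℤ_(3)` and the `S₃`-representation sending
`(1 2) ↦ [[1,3],[0,-1]]` and `(2 3) ↦ [[-2,-3],[1,2]]`, the invariant ring over the fraction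
field `ℚ` is `ℚ[f,g]`, the invariant `h = (g² - 4f³)/27` lies in `R[x,y]^G`, and
`R[x,y]^G ≠ R[f,g]`; in particular `R[x,y]^G` is not the polynomial ring on `f` and `g`. -/
theorem stmt18 (ρ : Equiv.Perm (Fin 3) →* Matrix.GeneralLinearGroup (Fin 2) Zloc3)
    (h12 : ρ (Equiv.swap 0 1) = M1 Zloc3) (h23 : ρ (Equiv.swap 1 2) = M2 Zloc3) :
    (invariantRing
        ((Matrix.GeneralLinearGroup.map (algebraMap Zloc3 (FractionRing Zloc3))).comp ρ) =
      Algebra.adjoin (FractionRing Zloc3)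
        {fpoly (FractionRing Zloc3), gpoly (FractionRing Zloc3)}) ∧
    (∃ h : MvPolynomial (Fin 2) Zloc3,
      27 * h = gpoly Zloc3 ^ 2 - 4 * fpoly Zloc3 ^ 3 ∧ h ∈ invariantRing ρ) ∧
    invariantRing ρ ≠ Algebra.adjoin Zloc3 {fpoly Zloc3, gpoly Zloc3} := by
  haveI hchar0 : CharZero Zloc3 := by
    have hle : (Ideal.span {(3 : ℤ)}).primeCompl ≤ nonZeroDivisors ℤ := by
      intro x hx
      exact mem_nonZeroDivisors_of_ne_zero (fun h0 => hx (h0 ▸ Ideal.zero_mem _))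
    exact charZero_of_injective_algebraMap (IsLocalization.injective Zloc3 hle)
  haveI : CharZero (FractionRing Zloc3) :=
    inferInstance
  have hinv : hpoly Zloc3 ∈ invariantRing ρ := by
    rw [mem_invariantRing]
    exact fix_of_gen ρ _ (by rw [h12]; exact gAct_M1_h Zloc3)
      (by rw [h23]; exact gAct_M2_h Zloc3)
  refine ⟨?_, ⟨hpoly Zloc3, hpoly_spec Zloc3, hinv⟩, ?_⟩
  · apply part1
    · show Matrix.GeneralLinearGroup.map (algebraMap Zloc3 (FractionRing Zloc3))
        (ρ (Equiv.swap 0 1)) = _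
      rw [h12, map_M1]
    · show Matrix.GeneralLinearGroup.map (algebraMap Zloc3 (FractionRing Zloc3))
        (ρ (Equiv.swap 1 2)) = _
      rw [h23, map_M2]
  · intro heq
    rw [heq] at hinv
    exact hpoly_not_mem hinv
end
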